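/- Let 0 < k < ℓ be integers and let (d_k, d_ℓ) be a pair of rational numbers satisfying 0 ≤ d_ℓ ≤ d_k and k(d_ℓ − 1) ≥ ℓ(d_k − 1). Then for every ε > 0 and every N there exists a word W over a two-letter alphabet {a,b} with |W| ≥ N such that |d(a^k, W) − d_k| < ε and |d(a^ℓ, W) − d_ℓ| < ε. -/

import Mathlib

open Filter

/-- `U` is an instance of `V`: image of `V` under a nonerasing substitution. -/
def IsInstance {Γ β : Type*} (V : List Γ) (U : List β) : Prop :=
  ∃ φ : Γ → List β, (∀ x ∈ V, φ x ≠ []) ∧ U = (V.map φ).flatten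

/-- `W` encounters `V`: some factor of `W` is an instance of `V`. -/
def Encounters {Γ β : Type*} (V : List Γ) (W : List β) : Prop :=
  ∃ U : List β, U <:+: W ∧ IsInstance V U

/-- Zimin words over alphabet ℕ. -/
def Zimin : ℕ → List ℕ
  | 0 => []
  | n + 1 => Zimin n ++ [n] ++ Zimin n

/-- Least M such that every q-ary word of length M encounters Z_n. -/
noncomputable def fZ (n q : ℕ) : ℕ :=
  sInf {M | ∀ W : List (Fin q), W.length = M → Encounters (Zimin n) W}

/-- Exponential tower with b copies of a. -/
def tower (a : ℕ) : ℕ → ℕ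
  | 0 => 1
  | b + 1 => a ^ tower a b

/-- Number of length-M q-ary words that are instances of V. -/
noncomputable def instCount (V : List ℕ) (q M : ℕ) : ℕ :=
  Nat.card {W : Fin M → Fin q // IsInstance V (List.ofFn W)}

/-- Factor density d(V,W). -/
noncomputable def factorDensity {α : Type*} [DecidableEq α] (V W : List α) : ℝ :=
  (((((Finset.range (W.length + 1)) ×ˢ (Finset.range (W.length + 1))).filter
      (fun p => p.1 < p.2 ∧ (W.drop p.1).take (p.2 - p.1) = V)).card : ℝ)) /
    ((W.length : ℝ) + 1 - (V.length : ℝ))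

/-- Number of substrings of W (given by position pairs) that are V-instances. -/
noncomputable def instSubCount {Γ β : Type*} (V : List Γ) (W : List β) : ℕ :=
  Nat.card {p : ℕ × ℕ //
    p.1 < p.2 ∧ p.2 ≤ W.length ∧ IsInstance V ((W.drop p.1).take (p.2 - p.1))}

/-- Instance density δ(V,W). -/
noncomputable def instDensity {Γ β : Type*} (V : List Γ) (W : List β) : ℝ :=
  (instSubCount V W : ℝ) / ((W.length + 1).choose 2 : ℝ)

/-- q-liminf density of V. -/
noncomputable def liminfDensity {Γ : Type*} (V : List Γ) (q : ℕ) : ℝ :=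
  Filter.liminf (fun W : List (Fin q) => instDensity V W) (Filter.comap List.length Filter.atTop)

/-- Expected instance density of V in a uniformly random q-ary word of length n. -/
noncomputable def expDensity {Γ : Type*} (V : List Γ) (q n : ℕ) : ℝ :=
  (∑ W : Fin n → Fin q, instDensity V (List.ofFn W)) / (q : ℝ) ^ n

/-- Variance of the instance density of V in a uniformly random q-ary word of length n. -/
noncomputable def varDensity {Γ : Type*} (V : List Γ) (q n : ℕ) : ℝ :=
  (∑ W : Fin n → Fin q, (instDensity V (List.ofFn W) - expDensity V q n) ^ 2) / (q : ℝ) ^ n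

/-- Probability that a uniformly random q-ary word of length n is a V-instance. -/
noncomputable def instProb {Γ : Type*} (V : List Γ) (q n : ℕ) : ℝ :=
  (Nat.card {W : Fin n → Fin q // IsInstance V (List.ofFn W)} : ℝ) / (q : ℝ) ^ n

/-- V is doubled: every letter occurring in V occurs at least twice. -/
def Doubled {Γ : Type*} [DecidableEq Γ] (V : List Γ) : Prop :=
  ∀ x ∈ V, 2 ≤ V.count x

/-- Number of letter recurrences ‖V‖ = |V| - |L(V)|. -/
def recurCount {Γ : Type*} [DecidableEq Γ] (V : List Γ) : ℕ :=
  V.length - V.dedup.length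

namespace Stmt7Aux

def occ (k : ℕ) (W : List (Fin 2)) : ℕ :=
  (List.range (W.length + 1)).countP
    (fun i => decide ((W.drop i).take k = List.replicate k (0 : Fin 2)))

lemma occ_nil {k : ℕ} (hk : 0 < k) : occ k ([] : List (Fin 2)) = 0 := by
  have : k ≠ 0 := hk.ne'
  simp [occ, List.range_succ, eq_comm (a := ([] : List (Fin 2))), List.replicate_eq_nil_iff, this]

lemma occ_cons (k : ℕ) (x : Fin 2) (W : List (Fin 2)) :
    occ k (x :: W) =
      (if (x :: W).take k = List.replicate k (0 : Fin 2) then 1 else 0) + occ k W := by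
  unfold occ
  rw [List.length_cons, List.range_succ_eq_map, List.countP_cons, List.countP_map]
  have : ((fun i => decide (((x :: W).drop i).take k = List.replicate k (0:Fin 2))) ∘ Nat.succ)
      = fun i => decide ((W.drop i).take k = List.replicate k (0:Fin 2)) := by
    funext i; simp [List.drop_succ_cons]
  rw [this]
  by_cases h : (x :: W).take k = List.replicate k (0:Fin 2) <;> simp [h] <;> omega

lemma take_one_ne {k : ℕ} (hk : 0 < k) (Z : List (Fin 2)) :
    (1 :: Z : List (Fin 2)).take k ≠ List.replicate k (0 : Fin 2) := by
  cases k with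
  | zero => omega
  | succ k =>
    rw [List.take_succ_cons, List.replicate_succ]
    intro hc
    have : (1 : Fin 2) = 0 := (List.cons_eq_cons.mp hc).1
    exact absurd this (by decide)

lemma occ_cons_one {k : ℕ} (hk : 0 < k) (Z : List (Fin 2)) :
    occ k (1 :: Z) = occ k Z := by
  rw [occ_cons, if_neg (take_one_ne hk Z), zero_add]

lemma occ_replicate_one {k : ℕ} (hk : 0 < k) (m : ℕ) :
    occ k (List.replicate m (1 : Fin 2)) = 0 := by
  induction m with
  | zero => exact occ_nil hk
  | succ m ih => rw [List.replicate_succ, occ_cons_one hk, ih]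

lemma occ_replicate_zero {k : ℕ} (hk : 0 < k) (m : ℕ) :
    occ k (List.replicate m (0 : Fin 2)) = m + 1 - k := by
  induction m with
  | zero => rw [List.replicate_zero, occ_nil hk]; omega
  | succ m ih =>
    rw [List.replicate_succ, occ_cons, ih, ← List.replicate_succ, List.take_replicate]
    by_cases h : k ≤ m + 1
    · rw [min_eq_left h, if_pos rfl]; omega
    · rw [min_eq_right (by omega : (m+1:ℕ) ≤ k), if_neg]
      · omega
      · intro hc
        have := congrArg List.length hc
        simp at this
        omega

lemma take_append_iff {k : ℕ} (hk : 0 < k) (X Y : List (Fin 2)) :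
    ((X ++ 1 :: Y).take k = List.replicate k (0 : Fin 2)) ↔
      (X.take k = List.replicate k (0 : Fin 2)) := by
  by_cases hle : k ≤ X.length
  · rw [List.take_append_of_le_length hle]
  · push_neg at hle
    constructor
    · intro h
      exfalso
      have hmem : (1 : Fin 2) ∈ (X ++ 1 :: Y).take k := by
        rw [List.take_append]
        refine List.mem_append_right _ ?_
        have : 0 < k - X.length := by omega
        obtain ⟨m, hm⟩ := Nat.exists_eq_add_of_lt this
        rw [hm]
        simp [List.take_succ_cons]
      rw [h] at hmem
      exact absurd (List.eq_of_mem_replicate hmem) (by decide)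
    · intro h
      exfalso
      have := congrArg List.length h
      simp [List.length_take] at this
      omega

lemma occ_append {k : ℕ} (hk : 0 < k) (X Y : List (Fin 2)) :
    occ k (X ++ 1 :: Y) = occ k X + occ k (1 :: Y) := by
  induction X with
  | nil => rw [List.nil_append, occ_nil hk, zero_add]
  | cons x X ih =>
    rw [List.cons_append, occ_cons, occ_cons k x X, ih]
    have : ((x :: (X ++ 1 :: Y)).take k = List.replicate k (0 : Fin 2)) ↔
        ((x :: X).take k = List.replicate k (0 : Fin 2)) :=
      take_append_iff hk (x :: X) Y
    by_cases h : (x :: X).take k = List.replicate k (0 : Fin 2)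
    · rw [if_pos h, if_pos (this.mpr h)]; omega
    · rw [if_neg h, if_neg (fun hc => h (this.mp hc))]; omega

/-- t blocks `1 0^(l-1)` followed by `1^(B+1)`. -/
def blk (l B : ℕ) : ℕ → List (Fin 2)
  | 0 => List.replicate (B + 1) 1
  | t + 1 => (1 :: List.replicate (l - 1) 0) ++ blk l B t

lemma blk_cons (l B t : ℕ) : ∃ Y, blk l B t = 1 :: Y := by
  cases t with
  | zero => exact ⟨List.replicate B 1, by rw [blk, List.replicate_succ]⟩
  | succ t => exact ⟨List.replicate (l - 1) 0 ++ blk l B t, by rw [blk, List.cons_append]⟩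

lemma blk_length {l : ℕ} (hl : 1 ≤ l) (B t : ℕ) :
    (blk l B t).length = t * l + B + 1 := by
  induction t with
  | zero => simp [blk]
  | succ t ih =>
    rw [blk, List.length_append, ih]
    simp only [List.length_cons, List.length_replicate]
    have : l - 1 + 1 = l := by omega
    rw [this]; ring

lemma occ_blk {k l : ℕ} (hk : 0 < k) (hkl : k ≤ l) (B t : ℕ) :
    occ k (blk l B t) = t * (l - k) := by
  induction t with
  | zero => rw [blk, occ_replicate_one hk]; omega
  | succ t ih =>
    obtain ⟨Y, hY⟩ := blk_cons l B t
    rw [blk, hY, occ_append hk, ← hY, ih, occ_cons_one hk, occ_replicate_zero hk]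
    have h1 : l - 1 + 1 - k = l - k := by omega
    rw [h1]; ring

lemma filter_range_card (m : ℕ) (p : ℕ → Prop) [DecidablePred p] :
    ((Finset.range m).filter p).card = (List.range m).countP (fun i => decide (p i)) := by
  induction m with
  | zero => simp
  | succ n ih =>
    rw [Finset.range_add_one, List.range_succ, List.countP_append,
      Finset.filter_insert]
    by_cases h : p n
    · rw [if_pos h, Finset.card_insert_of_notMem (by simp), ih]
      simp [h]
    · rw [if_neg h, ih]
      simp [h]

lemma pair_count {k : ℕ} (hk : 0 < k) (W : List (Fin 2)) :
    (((Finset.range (W.length + 1)) ×ˢ (Finset.range (W.length + 1))).filter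
      (fun p => p.1 < p.2 ∧ (W.drop p.1).take (p.2 - p.1) = List.replicate k (0:Fin 2))).card
    = occ k W := by
  have step1 : (((Finset.range (W.length + 1)) ×ˢ (Finset.range (W.length + 1))).filter
      (fun p => p.1 < p.2 ∧ (W.drop p.1).take (p.2 - p.1) = List.replicate k (0:Fin 2))).card
      = ((Finset.range (W.length + 1)).filter
          (fun i => (W.drop i).take k = List.replicate k (0:Fin 2))).card := by
    apply Finset.card_bij' (fun p _ => p.1) (fun i _ => (i, i + k))
    · -- forward maps into target
      intro a ha
      simp only [Finset.mem_filter, Finset.mem_product, Finset.mem_range] at ha ⊢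
      obtain ⟨⟨h1, h2⟩, hlt, heq⟩ := ha
      have hlen := congrArg List.length heq
      simp only [List.length_take, List.length_drop, List.length_replicate] at hlen
      have h21 : a.2 - a.1 = k := by omega
      exact ⟨h1, by rwa [h21] at heq⟩
    · -- backward maps into source
      intro i hi
      simp only [Finset.mem_filter, Finset.mem_product, Finset.mem_range] at hi ⊢
      obtain ⟨h1, heq⟩ := hi
      have hlen := congrArg List.length heq
      simp only [List.length_take, List.length_drop, List.length_replicate] at hlen
      refine ⟨⟨h1, by omega⟩, by omega, ?_⟩
      simpa using heq
    · intro a ha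
      simp only [Finset.mem_filter, Finset.mem_product, Finset.mem_range] at ha
      obtain ⟨⟨h1, h2⟩, hlt, heq⟩ := ha
      have hlen := congrArg List.length heq
      simp only [List.length_take, List.length_drop, List.length_replicate] at hlen
      have : a.1 + k = a.2 := by omega
      exact Prod.ext rfl this
    · intro i hi
      rfl
  rw [step1, occ, filter_range_card]

lemma density_eq {k : ℕ} (hk : 0 < k) (W : List (Fin 2)) :
    factorDensity (List.replicate k (0 : Fin 2)) W
      = (occ k W : ℝ) / ((W.length : ℝ) + 1 - (k : ℝ)) := by
  rw [factorDensity, pair_count hk, List.length_replicate]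

lemma div_est {eps x D u o c : ℝ} (hx : 0 < x) (hD : 0 < D)
    (hbound : |o * D - u * x| ≤ c * D) (hcx : c * D < eps * (x * D)) :
    |o / x - u / D| < eps := by
  rw [div_sub_div _ _ hx.ne' hD.ne', abs_div, abs_of_pos (mul_pos hx hD),
    div_lt_iff₀ (mul_pos hx hD)]
  have : x * u = u * x := mul_comm _ _
  rw [this]
  calc |o * D - u * x| ≤ c * D := hbound
    _ < eps * (x * D) := hcx

end Stmt7Aux

set_option maxHeartbeats 1600000 in
theorem stmt7 (k ℓ : ℕ) (hk : 0 < k) (hkl : k < ℓ) (dk dl : ℚ)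
    (h0 : 0 ≤ dl) (h1 : dl ≤ dk) (h2 : (ℓ : ℚ) * (dk - 1) ≤ (k : ℚ) * (dl - 1))
    (ε : ℝ) (hε : 0 < ε) (N : ℕ) :
    ∃ W : List (Fin 2), N ≤ W.length ∧
      |factorDensity (List.replicate k (0 : Fin 2)) W - (dk : ℝ)| < ε ∧
      |factorDensity (List.replicate ℓ (0 : Fin 2)) W - (dl : ℝ)| < ε := by
  have hkQ : (k : ℚ) < (ℓ : ℚ) := by exact_mod_cast hkl
  have hdk0 : 0 ≤ dk := le_trans h0 h1
  have hdk1 : dk ≤ 1 := by nlinarith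
  -- rational targets as fractions of naturals
  set D : ℕ := dl.den * dk.den with hDdef
  set p : ℕ := dl.num.toNat * dk.den with hpdef
  set q : ℕ := dk.num.toNat * dl.den with hqdef
  have hD : 0 < D := Nat.mul_pos dl.pos dk.pos
  have hDQ : (0 : ℚ) < (D : ℚ) := by exact_mod_cast hD
  have hnuml : ((dl.num.toNat : ℕ) : ℚ) = (dl.num : ℚ) := by
    exact_mod_cast congrArg (fun z : ℤ => (z : ℚ)) (Int.toNat_of_nonneg (Rat.num_nonneg.mpr h0))
  have hnumk : ((dk.num.toNat : ℕ) : ℚ) = (dk.num : ℚ) := by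
    exact_mod_cast congrArg (fun z : ℤ => (z : ℚ)) (Int.toNat_of_nonneg (Rat.num_nonneg.mpr hdk0))
  have hp : (dl : ℚ) = (p : ℚ) / (D : ℚ) := by
    rw [hpdef, hDdef]
    push_cast [hnuml]
    rw [mul_div_mul_right _ _ (by positivity : ((dk.den : ℚ)) ≠ 0), Rat.num_div_den]
  have hq : (dk : ℚ) = (q : ℚ) / (D : ℚ) := by
    rw [hqdef, hDdef]
    push_cast [hnumk]
    rw [mul_comm ((dl.den : ℚ)) ((dk.den : ℚ)),
      mul_div_mul_right _ _ (by positivity : ((dl.den : ℚ)) ≠ 0), Rat.num_div_den]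
  have hpqQ : (p : ℚ) ≤ (q : ℚ) := by
    rw [hp, hq] at h1
    exact (div_le_div_iff_of_pos_right hDQ).mp h1
  have hpq : p ≤ q := by exact_mod_cast hpqQ
  have hqD : q ≤ D := by
    have : (q : ℚ) ≤ (D : ℚ) := by
      rw [hq] at hdk1
      exact (div_le_one hDQ).mp hdk1
    exact_mod_cast this
  have hmain : ℓ * q + k * D ≤ k * p + ℓ * D := by
    have hQ : (ℓ : ℚ) * q + k * D ≤ k * p + ℓ * D := by
      rw [hp, hq] at h2
      have hD' : ((D : ℚ)) ≠ 0 := hDQ.ne'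
      field_simp at h2
      nlinarith [h2]
    exact_mod_cast hQ
  -- parameters
  set C : ℕ := 4 * ℓ + 4 with hCdef
  set s : ℕ := N + ℓ + 1 + ⌈(C : ℝ) / ε⌉₊ with hsdef
  set S : ℕ := s * (ℓ - k) with hSdef
  set A : ℕ := S * p + ℓ with hAdef
  set t : ℕ := s * (q - p) with htdef
  set B : ℕ := S * D - (A + t * ℓ) with hBdef
  set W : List (Fin 2) := List.replicate A (0 : Fin 2) ++ Stmt7Aux.blk ℓ B t with hWdef
  obtain ⟨Y, hY⟩ := Stmt7Aux.blk_cons ℓ B t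
  have hl : 0 < ℓ := lt_trans hk hkl
  have hS : s ≤ S := Nat.le_mul_of_pos_right s (by omega)
  have hSsd : S ≤ S * D := Nat.le_mul_of_pos_right S hD
  -- length of W
  have hlen : W.length = A + t * ℓ + B + 1 := by
    rw [hWdef, List.length_append, List.length_replicate, Stmt7Aux.blk_length hl]
    ring
  have hkey : A + t * ℓ ≤ S * D + ℓ := by
    have e1 : (ℓ - k) * p + (q - p) * ℓ ≤ (ℓ - k) * D := by
      zify [hpq, hkl.le]
      nlinarith [hmain]
    calc A + t * ℓ = s * ((ℓ - k) * p + (q - p) * ℓ) + ℓ := by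
          rw [hAdef, htdef, hSdef]; ring
      _ ≤ s * ((ℓ - k) * D) + ℓ := by
          exact Nat.add_le_add_right (Nat.mul_le_mul_left s e1) ℓ
      _ = S * D + ℓ := by rw [hSdef]; ring
  have hn1 : S * D + 1 ≤ W.length := by rw [hlen]; omega
  have hn2 : W.length ≤ S * D + ℓ + 1 := by rw [hlen]; omega
  -- occurrence counts
  have hocck : Stmt7Aux.occ k W = S * q + (ℓ + 1 - k) := by
    rw [hWdef, hY, Stmt7Aux.occ_append hk, ← hY, Stmt7Aux.occ_replicate_zero hk,
      Stmt7Aux.occ_blk hk hkl.le]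
    have h2' : t * (ℓ - k) = S * (q - p) := by rw [htdef, hSdef]; ring
    have h3 : S * p + S * (q - p) = S * q := by
      rw [← Nat.mul_add, Nat.add_sub_cancel' hpq]
    omega
  have hoccl : Stmt7Aux.occ ℓ W = S * p + 1 := by
    rw [hWdef, hY, Stmt7Aux.occ_append hl, ← hY, Stmt7Aux.occ_replicate_zero hl,
      Stmt7Aux.occ_blk hl le_rfl]
    rw [Nat.sub_self, Nat.mul_zero, hAdef]
    omega
  refine ⟨W, ?_, ?_, ?_⟩
  · -- length at least N
    have : s ≤ S * D := le_trans hS hSsd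
    omega
  · -- k-density
    rw [Stmt7Aux.density_eq hk]
    have hdkR : ((dk : ℚ) : ℝ) = (q : ℝ) / (D : ℝ) := by rw [hq]; push_cast; ring
    rw [hdkR]
    have hD0R : (0:ℝ) < (D:ℝ) := by exact_mod_cast hD
    have hsSD : s ≤ S * D := le_trans hS hSsd
    have hc1 : (S:ℝ)*(D:ℝ) + 1 ≤ (W.length : ℝ) := by exact_mod_cast hn1
    have hc2 : (W.length : ℝ) ≤ (S:ℝ)*(D:ℝ) + (ℓ:ℝ) + 1 := by exact_mod_cast hn2
    have hsc : (s:ℝ) ≤ (S:ℝ)*(D:ℝ) := by exact_mod_cast hsSD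
    have hsR : (N:ℝ) + (ℓ:ℝ) + 1 + (⌈(C:ℝ)/ε⌉₊ : ℝ) = (s:ℝ) := by
      rw [hsdef]; push_cast; ring
    have hceil : (C:ℝ)/ε ≤ (⌈(C:ℝ)/ε⌉₊ : ℝ) := Nat.le_ceil _
    have hklR : (k:ℝ) ≤ (ℓ:ℝ) := by exact_mod_cast hkl.le
    have hk1R : (1:ℝ) ≤ (k:ℝ) := by exact_mod_cast hk
    have hN0 : (0:ℝ) ≤ (N:ℝ) := Nat.cast_nonneg N
    set x : ℝ := (W.length : ℝ) + 1 - (k:ℝ) with hxdef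
    have hxgt : (C:ℝ)/ε < x := by rw [hxdef]; linarith
    have hx0 : (0:ℝ) < x := lt_of_le_of_lt (by positivity) hxgt
    have hCx : (C:ℝ) * D < ε * (x * D) := by
      have h' : (C:ℝ) < ε * x := by
        rw [div_lt_iff₀ hε] at hxgt; linarith
      calc (C:ℝ) * D < (ε*x) * D := mul_lt_mul_of_pos_right h' hD0R
        _ = ε * (x * D) := by ring
    apply Stmt7Aux.div_est hx0 hD0R ?_ hCx
    have hoR : (Stmt7Aux.occ k W : ℝ) = (S:ℝ)*(q:ℝ) + (ℓ:ℝ) + 1 - (k:ℝ) := by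
      have hnat : Stmt7Aux.occ k W + k = S*q + ℓ + 1 := by omega
      have hc := congrArg (fun m : ℕ => (m:ℝ)) hnat
      push_cast at hc
      linarith
    have hq0 : (0:ℝ) ≤ (q:ℝ) := Nat.cast_nonneg q
    have hqDR : (q:ℝ) ≤ (D:ℝ) := by exact_mod_cast hqD
    have hD1 : (1:ℝ) ≤ (D:ℝ) := by exact_mod_cast hD
    have hCR : (C:ℝ) = 4*(ℓ:ℝ) + 4 := by rw [hCdef]; push_cast; ring
    have hl0 : (0:ℝ) ≤ (ℓ:ℝ) := Nat.cast_nonneg ℓ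
    have hCD : (C:ℝ)*(D:ℝ) = 4*((ℓ:ℝ)*(D:ℝ)) + 4*(D:ℝ) := by rw [hCR]; ring
    rw [hoR, hxdef, abs_le]
    constructor
    · linarith [mul_le_mul_of_nonneg_left hc1 hq0, mul_le_mul_of_nonneg_left hc2 hq0,
        mul_le_mul_of_nonneg_right hqDR (by linarith : (0:ℝ) ≤ (ℓ:ℝ)+2),
        mul_le_mul_of_nonneg_right hklR hD0R.le,
        mul_nonneg hq0 (by linarith : (0:ℝ) ≤ (k:ℝ)),
        mul_le_mul_of_nonneg_left hklR hq0,
        mul_le_mul_of_nonneg_right hqDR hl0, hCD,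
        mul_le_mul_of_nonneg_right hk1R hD0R.le,
        mul_nonneg hl0 hD0R.le]
    · linarith [mul_le_mul_of_nonneg_left hc1 hq0, mul_le_mul_of_nonneg_left hc2 hq0,
        mul_le_mul_of_nonneg_right hqDR (by linarith : (0:ℝ) ≤ (ℓ:ℝ)+2),
        mul_le_mul_of_nonneg_right hklR hD0R.le,
        mul_nonneg hq0 (by linarith : (0:ℝ) ≤ (k:ℝ)),
        mul_le_mul_of_nonneg_left hklR hq0,
        mul_le_mul_of_nonneg_right hqDR hl0, hCD,
        mul_le_mul_of_nonneg_right hk1R hD0R.le,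
        mul_nonneg hl0 hD0R.le]
  · -- ℓ-density
    rw [Stmt7Aux.density_eq hl]
    have hdlR : ((dl : ℚ) : ℝ) = (p : ℝ) / (D : ℝ) := by rw [hp]; push_cast; ring
    rw [hdlR]
    have hD0R : (0:ℝ) < (D:ℝ) := by exact_mod_cast hD
    have hsSD : s ≤ S * D := le_trans hS hSsd
    have hc1 : (S:ℝ)*(D:ℝ) + 1 ≤ (W.length : ℝ) := by exact_mod_cast hn1
    have hc2 : (W.length : ℝ) ≤ (S:ℝ)*(D:ℝ) + (ℓ:ℝ) + 1 := by exact_mod_cast hn2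
    have hsc : (s:ℝ) ≤ (S:ℝ)*(D:ℝ) := by exact_mod_cast hsSD
    have hsR : (N:ℝ) + (ℓ:ℝ) + 1 + (⌈(C:ℝ)/ε⌉₊ : ℝ) = (s:ℝ) := by
      rw [hsdef]; push_cast; ring
    have hceil : (C:ℝ)/ε ≤ (⌈(C:ℝ)/ε⌉₊ : ℝ) := Nat.le_ceil _
    have hl1R : (1:ℝ) ≤ (ℓ:ℝ) := by exact_mod_cast hl
    have hN0 : (0:ℝ) ≤ (N:ℝ) := Nat.cast_nonneg N
    set x : ℝ := (W.length : ℝ) + 1 - (ℓ:ℝ) with hxdef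
    have hxgt : (C:ℝ)/ε < x := by rw [hxdef]; linarith
    have hx0 : (0:ℝ) < x := lt_of_le_of_lt (by positivity) hxgt
    have hCx : (C:ℝ) * D < ε * (x * D) := by
      have h' : (C:ℝ) < ε * x := by
        rw [div_lt_iff₀ hε] at hxgt; linarith
      calc (C:ℝ) * D < (ε*x) * D := mul_lt_mul_of_pos_right h' hD0R
        _ = ε * (x * D) := by ring
    apply Stmt7Aux.div_est hx0 hD0R ?_ hCx
    have hoR : (Stmt7Aux.occ ℓ W : ℝ) = (S:ℝ)*(p:ℝ) + 1 := by
      have hc := congrArg (fun m : ℕ => (m:ℝ)) hoccl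
      push_cast at hc
      linarith
    have hp0 : (0:ℝ) ≤ (p:ℝ) := Nat.cast_nonneg p
    have hpDR : (p:ℝ) ≤ (D:ℝ) := by
      have : p ≤ D := le_trans hpq hqD
      exact_mod_cast this
    have hD1 : (1:ℝ) ≤ (D:ℝ) := by exact_mod_cast hD
    have hCR : (C:ℝ) = 4*(ℓ:ℝ) + 4 := by rw [hCdef]; push_cast; ring
    have hl0 : (0:ℝ) ≤ (ℓ:ℝ) := Nat.cast_nonneg ℓ
    have hCD : (C:ℝ)*(D:ℝ) = 4*((ℓ:ℝ)*(D:ℝ)) + 4*(D:ℝ) := by rw [hCR]; ring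
    rw [hoR, hxdef, abs_le]
    constructor
    · linarith [mul_le_mul_of_nonneg_left hc1 hp0, mul_le_mul_of_nonneg_left hc2 hp0,
        mul_le_mul_of_nonneg_right hpDR (by linarith : (0:ℝ) ≤ (ℓ:ℝ)+2),
        mul_nonneg hp0 hl0,
        mul_le_mul_of_nonneg_right hpDR hl0, hCD,
        mul_nonneg hl0 hD0R.le]
    · linarith [mul_le_mul_of_nonneg_left hc1 hp0, mul_le_mul_of_nonneg_left hc2 hp0,
        mul_le_mul_of_nonneg_right hpDR (by linarith : (0:ℝ) ≤ (ℓ:ℝ)+2),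
        mul_nonneg hp0 hl0,
        mul_le_mul_of_nonneg_right hpDR hl0, hCD,
        mul_nonneg hl0 hD0R.le]
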